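/- If X is a symmetrizable operator, then its two operator norms satisfy ‖X‖_{B(H)} ≤ ‖X‖_{B(E)}, where ‖X‖_{B(H)} is the norm of its extension to H. -/

import Mathlib

open ContinuousLinearMap in
lemma symm_pow
    {E H : Type*} [NormedAddCommGroup E] [NormedSpace ℂ E]
    [NormedAddCommGroup H] [InnerProductSpace ℂ H]
    (ι : E →L[ℂ] H) (X : E →L[ℂ] E)
    (hsymm : ∀ f g : E, (inner ℂ (ι (X f)) (ι g) : ℂ) = inner ℂ (ι f) (ι (X g))) :
    ∀ n (f g : E), (inner ℂ (ι ((X ^ n) f)) (ι g) : ℂ) = inner ℂ (ι f) (ι ((X ^ n) g)) := by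
  intro n
  induction n with
  | zero => intro f g; simp
  | succ n ih =>
    intro f g
    have h1 : (X ^ (n+1)) f = (X ^ n) (X f) := by
      rw [pow_succ]; rfl
    have h2 : (X ^ (n+1)) g = X ((X ^ n) g) := by
      rw [pow_succ']; rfl
    rw [h1, h2, ih (X f) g, hsymm]

lemma key_estimate
    {E H : Type*} [NormedAddCommGroup E] [NormedSpace ℂ E]
    [NormedAddCommGroup H] [InnerProductSpace ℂ H]
    (ι : E →L[ℂ] H) (hinj : Function.Injective ι)
    (X : E →L[ℂ] E)
    (hsymm : ∀ f g : E, (inner ℂ (ι (X f)) (ι g) : ℂ) = inner ℂ (ι f) (ι (X g)))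
    (f : E) : ‖ι (X f)‖ ≤ ‖X‖ * ‖ι f‖ := by
  -- b j := ‖ι ((X ^ j) f)‖
  set b : ℕ → ℝ := fun j => ‖ι ((X ^ j) f)‖ with hb
  have hbnn : ∀ j, 0 ≤ b j := fun j => norm_nonneg _
  have hsq : ∀ j, b j ^ 2 ≤ b 0 * b (2 * j) := by
    intro j
    have h1 : (inner ℂ (ι ((X ^ j) f)) (ι ((X ^ j) f)) : ℂ)
        = inner ℂ (ι f) (ι ((X ^ (2 * j)) f)) := by
      rw [symm_pow ι X hsymm j f ((X ^ j) f)]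
      congr 2
      rw [two_mul, pow_add]
      rfl
    have h2 : (b j) ^ 2 = RCLike.re (inner ℂ (ι ((X ^ j) f)) (ι ((X ^ j) f)) : ℂ) := by
      rw [inner_self_eq_norm_sq]
    rw [h2, h1]
    calc RCLike.re (inner ℂ (ι f) (ι ((X ^ (2 * j)) f)) : ℂ)
        ≤ ‖(inner ℂ (ι f) (ι ((X ^ (2 * j)) f)) : ℂ)‖ := RCLike.re_le_norm _
      _ ≤ ‖ι f‖ * ‖ι ((X ^ (2 * j)) f)‖ := norm_inner_le_norm _ _
      _ = b 0 * b (2 * j) := by simp [hb]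
  -- P n : b 1 ^ 2^n ≤ b 0 ^ (2^n - 1) * b (2^n)
  have P : ∀ n : ℕ, b 1 ^ (2 ^ n) ≤ b 0 ^ (2 ^ n - 1) * b (2 ^ n) := by
    intro n
    induction n with
    | zero => simp
    | succ n ih =>
      have h2n : 1 ≤ 2 ^ n := Nat.one_le_two_pow
      calc b 1 ^ 2 ^ (n + 1) = (b 1 ^ 2 ^ n) ^ 2 := by
            rw [← pow_mul, pow_succ]
        _ ≤ (b 0 ^ (2 ^ n - 1) * b (2 ^ n)) ^ 2 := by
            apply pow_le_pow_left₀ (pow_nonneg (hbnn 1) _) ih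
        _ = b 0 ^ (2 * (2 ^ n - 1)) * b (2 ^ n) ^ 2 := by
            rw [mul_pow, ← pow_mul, mul_comm (2 ^ n - 1) 2]
        _ ≤ b 0 ^ (2 * (2 ^ n - 1)) * (b 0 * b (2 * 2 ^ n)) := by
            apply mul_le_mul_of_nonneg_left (hsq (2 ^ n)) (pow_nonneg (hbnn 0) _)
        _ = b 0 ^ (2 ^ (n + 1) - 1) * b (2 ^ (n + 1)) := by
            rw [← mul_assoc, ← pow_succ]
            congr 2
            · omega
            · rw [pow_succ, mul_comm]
  -- bound b (2^n)
  have hbn : ∀ m : ℕ, 0 < m → b m ≤ ‖ι‖ * (‖X‖ ^ m * ‖f‖) := by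
    intro m hm
    calc b m ≤ ‖ι‖ * ‖(X ^ m) f‖ := ι.le_opNorm _
      _ ≤ ‖ι‖ * (‖X ^ m‖ * ‖f‖) :=
          mul_le_mul_of_nonneg_left ((X ^ m).le_opNorm f) (norm_nonneg ι)
      _ ≤ ‖ι‖ * (‖X‖ ^ m * ‖f‖) := by
          apply mul_le_mul_of_nonneg_left _ (norm_nonneg ι)
          exact mul_le_mul_of_nonneg_right (norm_pow_le' X hm) (norm_nonneg f)
  by_cases hf0 : ι f = 0
  · have hf : f = 0 := hinj (by simp [hf0])
    simp [hf]
  by_cases hX0 : ‖X‖ = 0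
  · have hX : X = 0 := norm_eq_zero.mp hX0
    simp [hX]
  have hb0 : 0 < b 0 := by simpa [hb] using norm_pos_iff.mpr hf0
  have hXpos : 0 < ‖X‖ := lt_of_le_of_ne (norm_nonneg X) (Ne.symm hX0)
  by_contra hcon
  push_neg at hcon
  set r : ℝ := b 1 / (‖X‖ * b 0) with hr
  have hr1 : 1 < r := by
    rw [hr, lt_div_iff₀ (by positivity), one_mul]
    simpa [hb] using hcon
  have hK : ∀ n : ℕ, r ^ (2 ^ n) ≤ ‖ι‖ * ‖f‖ / b 0 := by
    intro n
    have hbnn' := hbn (2 ^ n) (pow_pos two_pos n)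
    have h : b 1 ^ (2 ^ n) ≤ b 0 ^ (2 ^ n - 1) * (‖ι‖ * (‖X‖ ^ (2 ^ n) * ‖f‖)) :=
      le_trans (P n) (mul_le_mul_of_nonneg_left hbnn' (pow_nonneg (hbnn 0) _))
    have hb0pow : b 0 ^ (2 ^ n - 1) * b 0 = b 0 ^ (2 ^ n) := by
      rw [← pow_succ]; congr 1
      have := Nat.one_le_two_pow (n := n); omega
    rw [hr, div_pow, div_le_div_iff₀ (by positivity) hb0]
    calc b 1 ^ 2 ^ n * b 0
        ≤ (b 0 ^ (2 ^ n - 1) * (‖ι‖ * (‖X‖ ^ (2 ^ n) * ‖f‖))) * b 0 :=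
          mul_le_mul_of_nonneg_right h (hbnn 0)
      _ = (b 0 ^ (2 ^ n - 1) * b 0) * (‖ι‖ * (‖X‖ ^ (2 ^ n) * ‖f‖)) := by ring
      _ = b 0 ^ (2 ^ n) * (‖ι‖ * (‖X‖ ^ (2 ^ n) * ‖f‖)) := by rw [hb0pow]
      _ = ‖ι‖ * ‖f‖ * (‖X‖ * b 0) ^ (2 ^ n) := by rw [mul_pow]; ring
  obtain ⟨n, hn⟩ := pow_unbounded_of_one_lt (‖ι‖ * ‖f‖ / b 0) hr1
  have h2 : r ^ n ≤ r ^ (2 ^ n) :=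
    pow_le_pow_right₀ (le_of_lt hr1) (Nat.le_of_lt (Nat.lt_two_pow_self (n := n)))
  exact absurd (hK n) (not_le.mpr (lt_of_lt_of_le hn h2))

theorem symmetrizable_norm_le'
    {E H : Type*} [NormedAddCommGroup E] [NormedSpace ℂ E] [CompleteSpace E]
    [NormedAddCommGroup H] [InnerProductSpace ℂ H] [CompleteSpace H]
    (ι : E →L[ℂ] H) (hinj : Function.Injective ι) (hdense : DenseRange ι)
    (X : E →L[ℂ] E)
    (hsymm : ∀ f g : E, (inner ℂ (ι (X f)) (ι g) : ℂ) = inner ℂ (ι f) (ι (X g)))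
    (key : ∀ f : E, ‖ι (X f)‖ ≤ ‖X‖ * ‖ι f‖) :
    ∃ Xbar : H →L[ℂ] H, IsSelfAdjoint Xbar ∧ (∀ f : E, Xbar (ι f) = ι (X f)) ∧
      ‖Xbar‖ ≤ ‖X‖ := by
  set ιl : E →ₗ[ℂ] H := (ι : E →ₗ[ℂ] H) with hιl
  set p : Submodule ℂ H := LinearMap.range ιl with hp
  have hpc : (p : Set H) = Set.range ι := LinearMap.coe_range ιl
  have hpd : Dense (p : Set H) := by rw [hpc]; exact hdense
  set e : E ≃ₗ[ℂ] p := LinearEquiv.ofInjective ιl hinj with he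
  have hecoe : ∀ f : E, ((e f : p) : H) = ι f := fun f => rfl
  set S₀ : p →ₗ[ℂ] H := (ι.toLinearMap.comp X.toLinearMap).comp e.symm.toLinearMap with hS₀
  have hS₀app : ∀ y : p, S₀ y = ι (X (e.symm y)) := fun y => rfl
  have hbound : ∀ y : p, ‖S₀ y‖ ≤ ‖X‖ * ‖y‖ := by
    intro y
    rw [hS₀app]
    have : (y : H) = ι (e.symm y) := by
      conv_lhs => rw [← e.apply_symm_apply y]
      exact hecoe _
    calc ‖ι (X (e.symm y))‖ ≤ ‖X‖ * ‖ι (e.symm y)‖ := key _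
      _ = ‖X‖ * ‖y‖ := by rw [← this]; rfl
  set S : p →L[ℂ] H := S₀.mkContinuous ‖X‖ hbound with hS
  have h_dense2 : DenseRange (p.subtypeL : p →L[ℂ] H) := by
    have : Set.range (p.subtypeL : p →L[ℂ] H) = (p : Set H) := Subtype.range_coe
    rw [DenseRange, this]; exact hpd
  have h_e : ∀ x : p, ‖x‖ ≤ (1 : NNReal) * ‖p.subtypeL x‖ := by
    intro x; rw [NNReal.coe_one, one_mul]; exact le_of_eq rfl
  set Xbar : H →L[ℂ] H :=
    S.extend p.subtypeL with hXbar
  have hext : ∀ f : E, Xbar (ι f) = ι (X f) := by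
    intro f
    have : ι f = p.subtypeL (e f) := rfl
    rw [this, hXbar, ContinuousLinearMap.extend_eq _ h_dense2
      (ContinuousLinearMap.isUniformEmbedding_of_bound _ h_e).isUniformInducing]
    show S₀ (e f) = _
    rw [hS₀app, e.symm_apply_apply]
  have hnorm : ‖Xbar‖ ≤ ‖X‖ := by
    have h1 := ContinuousLinearMap.opNorm_extend_le S h_dense2 h_e
    have h2 : ‖S‖ ≤ ‖X‖ := S₀.mkContinuous_norm_le (norm_nonneg X) hbound
    simpa using h1.trans (by simpa using h2)
  refine ⟨Xbar, ?_, hext, hnorm⟩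
  rw [ContinuousLinearMap.isSelfAdjoint_iff_isSymmetric]
  intro x y
  show (inner ℂ (Xbar x) y : ℂ) = inner ℂ x (Xbar y)
  have h1 : ∀ f : E, ∀ y : H, (inner ℂ (Xbar (ι f)) y : ℂ) = inner ℂ (ι f) (Xbar y) := by
    intro f y
    refine hdense.induction_on y ?_ ?_
    · exact isClosed_eq (Continuous.inner continuous_const continuous_id)
        (Continuous.inner continuous_const Xbar.continuous)
    · intro g
      rw [hext f, hext g, hsymm]
  refine hdense.induction_on x ?_ ?_
  · exact isClosed_eq (Continuous.inner Xbar.continuous continuous_const)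
      (Continuous.inner continuous_id continuous_const)
  · intro f
    exact h1 f y

/-- the two operator norms of a symmetrizable operator satisfy
`‖X‖_{B(H)} ≤ ‖X‖_{B(E)}`: the self-adjoint extension `Xbar` of `X` to `H`
has operator norm at most `‖X‖`. -/
theorem symmetrizable_norm_le
    {E H : Type*} [NormedAddCommGroup E] [NormedSpace ℂ E] [CompleteSpace E]
    [NormedAddCommGroup H] [InnerProductSpace ℂ H] [CompleteSpace H]
    (ι : E →L[ℂ] H) (hinj : Function.Injective ι) (hdense : DenseRange ι)
    (X : E →L[ℂ] E)
    (hsymm : ∀ f g : E, (inner ℂ (ι (X f)) (ι g) : ℂ) = inner ℂ (ι f) (ι (X g))) :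
    ∃ Xbar : H →L[ℂ] H, IsSelfAdjoint Xbar ∧ (∀ f : E, Xbar (ι f) = ι (X f)) ∧
      ‖Xbar‖ ≤ ‖X‖ :=
  symmetrizable_norm_le' ι hinj hdense X hsymm (key_estimate ι hinj X hsymm)
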